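/- arXiv:1910.12300 — 2 statements merged into one kernel-verified Lean document; each statement's English description precedes it below -/
import Mathlib

section
/- (Composition estimate) Let $\sigma, \rho > 0$, $u \in \mathcal{H}(\mathbb{T}^\infty_{\sigma+\rho}, X)$ and $\alpha \in \mathcal{H}(\mathbb{T}^\infty_\sigma, \ell^\infty)$ with $\|\alpha\|_\sigma \le \rho$. Then the composed function $f(\varphi) := u(\varphi + \alpha(\varphi))$ belongs to $\mathcal{H}(\mathbb{T}^\infty_\sigma, X)$ with $\|f\|_\sigma \le \|u\|_{\sigma+\rho}$. In particular the composition operator $\Phi_\alpha : u \mapsto u(\cdot + \alpha(\cdot))$ is a bounded linear map from $\mathcal{H}(\mathbb{T}^\infty_{\sigma+\rho}, X)$ to $\mathcal{H}(\mathbb{T}^\infty_\sigma, X)$ of operator norm at most $1$. -/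
open scoped BigOperators

/-- The weighted norm `|ℓ|_η = ∑_j ⟨j⟩^η |ℓ_j|` on finitely supported integer sequences. -/
noncomputable def wnorm (η : ℝ) (ℓ : ℕ →₀ ℤ) : ℝ :=
  ∑ j ∈ ℓ.support, ((j : ℝ) + 1) ^ η * |(ℓ j : ℝ)|

/-- The space `ℓ^∞(ℕ, ℂ)`. -/
abbrev Linf : Type := lp (fun _ : ℕ => ℂ) ⊤

/-- Evaluation of the `ℓ^∞`-valued Fourier series with coefficients `A` at a point `θ`. -/
noncomputable def vecEval (A : (ℕ →₀ ℤ) → Linf) (θ : ℕ → ℂ) (j : ℕ) : ℂ :=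
  ∑' ℓ : ℕ →₀ ℤ, (A ℓ : ℕ → ℂ) j *
    Complex.exp (Complex.I * ∑ k ∈ ℓ.support, (ℓ k : ℂ) * θ k)

/-- Membership in the thickened torus `𝕋^∞_σ`: `|Im θ_j| ≤ σ ⟨j⟩^η`. -/
def inTorus (η σ : ℝ) (θ : ℕ → ℂ) : Prop :=
  ∀ j : ℕ, |(θ j).im| ≤ σ * ((j : ℝ) + 1) ^ η

/- ### Auxiliary lemmas -/

lemma wnorm_eq_on (η : ℝ) (ℓ : ℕ →₀ ℤ) {s : Finset ℕ} (hs : ℓ.support ⊆ s) :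
    wnorm η ℓ = ∑ j ∈ s, ((j : ℝ) + 1) ^ η * |(ℓ j : ℝ)| := by
  refine Finset.sum_subset hs (fun j _ hj => ?_)
  simp only [Finsupp.notMem_support_iff] at hj
  simp [hj]

lemma wnorm_nonneg (η : ℝ) (ℓ : ℕ →₀ ℤ) : 0 ≤ wnorm η ℓ := by
  refine Finset.sum_nonneg fun j _ => mul_nonneg ?_ (abs_nonneg _)
  positivity

lemma wnorm_zero (η : ℝ) : wnorm η 0 = 0 := by simp [wnorm]

lemma wnorm_add_le (η : ℝ) (k l : ℕ →₀ ℤ) :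
    wnorm η (k + l) ≤ wnorm η k + wnorm η l := by
  rw [wnorm_eq_on η (k+l) (s := k.support ∪ l.support) (Finsupp.support_add),
    wnorm_eq_on η k (s := k.support ∪ l.support) (Finset.subset_union_left),
    wnorm_eq_on η l (s := k.support ∪ l.support) (Finset.subset_union_right),
    ← Finset.sum_add_distrib]
  refine Finset.sum_le_sum fun j _ => ?_
  rw [← mul_add]
  refine mul_le_mul_of_nonneg_left ?_ (by positivity)
  rw [Finsupp.add_apply]
  push_cast
  exact abs_add_le _ _

lemma wnorm_finsetSum_le (η : ℝ) {ι : Type*} (s : Finset ι) (m : ι → (ℕ →₀ ℤ)) :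
    wnorm η (∑ i ∈ s, m i) ≤ ∑ i ∈ s, wnorm η (m i) := by
  induction s using Finset.cons_induction with
  | empty => simp [wnorm_zero]
  | cons a s ha ih =>
    rw [Finset.sum_cons, Finset.sum_cons]
    exact (wnorm_add_le η _ _).trans (by linarith)

noncomputable def onorm (ℓ : ℕ →₀ ℤ) : ℝ := ∑ j ∈ ℓ.support, |(ℓ j : ℝ)|

lemma onorm_le_wnorm {η : ℝ} (hη : 0 ≤ η) (ℓ : ℕ →₀ ℤ) : onorm ℓ ≤ wnorm η ℓ := by
  refine Finset.sum_le_sum fun j _ => ?_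
  nth_rewrite 1 [← one_mul |(ℓ j : ℝ)|]
  refine mul_le_mul_of_nonneg_right ?_ (abs_nonneg _)
  exact Real.one_le_rpow (by have := Nat.cast_nonneg (α := ℝ) j; linarith) hη

lemma onorm_nonneg (ℓ : ℕ →₀ ℤ) : 0 ≤ onorm ℓ :=
  Finset.sum_nonneg fun _ _ => abs_nonneg _

/-- The character `e^{i ℓ·θ}`. -/
noncomputable def chr (ℓ : ℕ →₀ ℤ) (θ : ℕ → ℂ) : ℂ :=
  Complex.exp (Complex.I * ∑ j ∈ ℓ.support, (ℓ j : ℂ) * θ j)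

lemma chr_eq_on (ℓ : ℕ →₀ ℤ) (θ : ℕ → ℂ) {s : Finset ℕ} (hs : ℓ.support ⊆ s) :
    chr ℓ θ = Complex.exp (Complex.I * ∑ j ∈ s, (ℓ j : ℂ) * θ j) := by
  unfold chr
  congr 2
  refine Finset.sum_subset hs (fun j _ hj => ?_)
  simp only [Finsupp.notMem_support_iff] at hj
  simp [hj]

lemma chr_zero (θ : ℕ → ℂ) : chr 0 θ = 1 := by simp [chr]

lemma chr_add (k l : ℕ →₀ ℤ) (θ : ℕ → ℂ) : chr (k + l) θ = chr k θ * chr l θ := by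
  rw [chr_eq_on (k+l) θ (s := k.support ∪ l.support) (Finsupp.support_add),
    chr_eq_on k θ (s := k.support ∪ l.support) (Finset.subset_union_left),
    chr_eq_on l θ (s := k.support ∪ l.support) (Finset.subset_union_right),
    ← Complex.exp_add, ← mul_add, ← Finset.sum_add_distrib]
  congr 2
  refine Finset.sum_congr rfl fun j _ => ?_
  rw [Finsupp.add_apply]
  push_cast
  ring

lemma chr_sum {ι : Type*} (s : Finset ι) (m : ι → (ℕ →₀ ℤ)) (θ : ℕ → ℂ) :
    chr (∑ i ∈ s, m i) θ = ∏ i ∈ s, chr (m i) θ := by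
  induction s using Finset.cons_induction with
  | empty => simp [chr_zero]
  | cons a s ha ih => rw [Finset.sum_cons, Finset.prod_cons, chr_add, ih]

lemma chr_norm_le {η σ : ℝ} {θ : ℕ → ℂ} (hθ : inTorus η σ θ) (ℓ : ℕ →₀ ℤ) :
    ‖chr ℓ θ‖ ≤ Real.exp (σ * wnorm η ℓ) := by
  rw [chr, Complex.norm_exp, Real.exp_le_exp]
  have h1 : (Complex.I * ∑ j ∈ ℓ.support, (ℓ j : ℂ) * θ j).re
      = - (∑ j ∈ ℓ.support, (ℓ j : ℂ) * θ j).im := by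
    simp [Complex.mul_re]
  rw [h1, Complex.im_sum]
  have h2 : ∀ j ∈ ℓ.support, -((ℓ j : ℂ) * θ j).im ≤ σ * (((j : ℝ) + 1) ^ η * |(ℓ j : ℝ)|) := by
    intro j _
    have : ((ℓ j : ℂ) * θ j).im = (ℓ j : ℝ) * (θ j).im := by
      simp [Complex.mul_im]
    rw [this]
    calc -((ℓ j : ℝ) * (θ j).im) ≤ |(ℓ j : ℝ) * (θ j).im| := neg_le_abs _
      _ = |(ℓ j : ℝ)| * |(θ j).im| := abs_mul _ _
      _ ≤ |(ℓ j : ℝ)| * (σ * ((j : ℝ) + 1) ^ η) :=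
          mul_le_mul_of_nonneg_left (hθ j) (abs_nonneg _)
      _ = σ * (((j : ℝ) + 1) ^ η * |(ℓ j : ℝ)|) := by ring
  calc -(∑ j ∈ ℓ.support, ((ℓ j : ℂ) * θ j).im)
      = ∑ j ∈ ℓ.support, -((ℓ j : ℂ) * θ j).im := by rw [Finset.sum_neg_distrib]
    _ ≤ ∑ j ∈ ℓ.support, σ * (((j : ℝ) + 1) ^ η * |(ℓ j : ℝ)|) := Finset.sum_le_sum h2
    _ = σ * wnorm η ℓ := by rw [wnorm, Finset.mul_sum]

lemma prod_consEquiv {G : Type*} {M : Type*} [CommMonoid M] {n : ℕ}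
    (x : G × (Fin n → G)) (f : G → M) :
    (∏ i, f ((Fin.consEquiv (fun _ : Fin (n + 1) => G)) x i)) = f x.1 * ∏ i, f (x.2 i) := by
  simp only [Fin.consEquiv_apply]
  rw [Fin.prod_univ_succ]
  simp

lemma tsum_pow_pi {𝕜 : Type*} [NormedField 𝕜] [CompleteSpace 𝕜] {G : Type*} (q : G → 𝕜)
    (hq : Summable fun m => ‖q m‖) : ∀ n : ℕ,
    (Summable fun m : Fin n → G => ∏ i, ‖q (m i)‖) ∧
    (∑' m, q m) ^ n = ∑' m : Fin n → G, ∏ i, q (m i) := by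
  intro n
  induction n with
  | zero =>
    haveI : Unique (Fin 0 → G) := Pi.uniqueOfIsEmpty _
    constructor
    · exact .of_finite
    · simp only [pow_zero]
      rw [tsum_eq_single (default : Fin 0 → G) (fun b hb => absurd (Subsingleton.elim b default) hb)]
      simp
  | succ n ih =>
    obtain ⟨ihS, ihE⟩ := ih
    let e : G × (Fin n → G) ≃ (Fin (n + 1) → G) := Fin.consEquiv (fun _ => G)
    have hSnorm : Summable (fun x : G × (Fin n → G) => ‖q x.1‖ * ∏ i, ‖q (x.2 i)‖) :=
      Summable.mul_of_nonneg (f := fun m => ‖q m‖) (g := fun m : Fin n → G => ∏ i, ‖q (m i)‖)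
        hq ihS (fun m => norm_nonneg _) (fun m => Finset.prod_nonneg fun i _ => norm_nonneg _)
    have hS1 : Summable (fun m : Fin (n+1) → G => ∏ i, ‖q (m i)‖) := by
      rw [← e.summable_iff]
      exact hSnorm.congr fun x => (prod_consEquiv x (fun m => ‖q m‖)).symm
    refine ⟨hS1, ?_⟩
    have hprodsum : Summable (fun m : Fin n → G => ‖∏ i, q (m i)‖) :=
      ihS.congr fun m => (norm_prod _ _).symm
    rw [pow_succ', ihE, tsum_mul_tsum_of_summable_norm hq hprodsum, ← e.tsum_eq]
    exact tsum_congr fun x => (prod_consEquiv x q).symm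

set_option maxHeartbeats 2000000 in
/-- Composition estimate: if `u ∈ 𝓗(𝕋^∞_{σ+ρ}, X)` and
`α ∈ 𝓗(𝕋^∞_σ, ℓ^∞)` with `‖α‖_σ ≤ ρ`, then `f(φ) = u(φ + α(φ))` belongs to
`𝓗(𝕋^∞_σ, X)` with `‖f‖_σ ≤ ‖u‖_{σ+ρ}`: there are Fourier coefficients `c` with the
stated norm bound whose series represents `u(φ + α(φ))` on `𝕋^∞_σ`. -/
theorem stmt6 {X : Type*} [NormedAddCommGroup X] [NormedSpace ℂ X] [CompleteSpace X]
    (η σ ρ : ℝ) (hη : 0 < η) (hσ : 0 < σ) (hρ : 0 < ρ)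
    (u : (ℕ →₀ ℤ) → X)
    (hu : Summable fun ℓ : ℕ →₀ ℤ => Real.exp ((σ + ρ) * wnorm η ℓ) * ‖u ℓ‖)
    (A : (ℕ →₀ ℤ) → Linf)
    (hA : Summable fun ℓ : ℕ →₀ ℤ => Real.exp (σ * wnorm η ℓ) * ‖A ℓ‖)
    (hAρ : (∑' ℓ : ℕ →₀ ℤ, Real.exp (σ * wnorm η ℓ) * ‖A ℓ‖) ≤ ρ) :
    ∃ c : (ℕ →₀ ℤ) → X,
      (Summable fun k : ℕ →₀ ℤ => Real.exp (σ * wnorm η k) * ‖c k‖) ∧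
      (∑' k : ℕ →₀ ℤ, Real.exp (σ * wnorm η k) * ‖c k‖) ≤
        (∑' ℓ : ℕ →₀ ℤ, Real.exp ((σ + ρ) * wnorm η ℓ) * ‖u ℓ‖) ∧
      ∀ θ : ℕ → ℂ, inTorus η σ θ →
        (∑' ℓ : ℕ →₀ ℤ, Complex.exp (Complex.I * ∑ j ∈ ℓ.support,
            (ℓ j : ℂ) * (θ j + vecEval A θ j)) • u ℓ) =
          ∑' k : ℕ →₀ ℤ, Complex.exp (Complex.I * ∑ j ∈ k.support,
            (k j : ℂ) * θ j) • c k := by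
  classical
  -- weight
  set w : (ℕ →₀ ℤ) → ℝ := fun k => Real.exp (σ * wnorm η k) with hw_def
  have hwpos : ∀ k, 0 < w k := fun k => Real.exp_pos _
  have hw1 : ∀ k, 1 ≤ w k := fun k =>
    Real.one_le_exp (mul_nonneg hσ.le (wnorm_nonneg η k))
  have hA' : Summable fun m : ℕ →₀ ℤ => w m * ‖A m‖ := hA
  have hAρ' : (∑' m : ℕ →₀ ℤ, w m * ‖A m‖) ≤ ρ := hAρ
  -- coefficients of ℓ · α
  set b : (ℕ →₀ ℤ) → (ℕ →₀ ℤ) → ℂ :=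
    fun ℓ m => ∑ j ∈ ℓ.support, (ℓ j : ℂ) * (A m : ℕ → ℂ) j with hb_def
  have hbnorm : ∀ ℓ m, ‖b ℓ m‖ ≤ onorm ℓ * ‖A m‖ := by
    intro ℓ m
    calc ‖b ℓ m‖ ≤ ∑ j ∈ ℓ.support, ‖(ℓ j : ℂ) * (A m : ℕ → ℂ) j‖ := norm_sum_le _ _
      _ ≤ ∑ j ∈ ℓ.support, |(ℓ j : ℝ)| * ‖A m‖ := by
          refine Finset.sum_le_sum fun j _ => ?_
          rw [norm_mul]
          have h1 : ‖(ℓ j : ℂ)‖ = |(ℓ j : ℝ)| := by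
            rw [Complex.norm_intCast]
          rw [h1]
          exact mul_le_mul_of_nonneg_left (lp.norm_apply_le_norm (by norm_num) (A m) j)
            (abs_nonneg _)
      _ = onorm ℓ * ‖A m‖ := by rw [onorm, Finset.sum_mul]
  have hbsum : ∀ ℓ, Summable fun m => w m * ‖b ℓ m‖ := by
    intro ℓ
    refine Summable.of_nonneg_of_le (fun m => mul_nonneg (hwpos m).le (norm_nonneg _))
      (fun m => ?_) (hA'.mul_left (onorm ℓ))
    calc w m * ‖b ℓ m‖ ≤ w m * (onorm ℓ * ‖A m‖) :=
          mul_le_mul_of_nonneg_left (hbnorm ℓ m) (hwpos m).le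
      _ = onorm ℓ * (w m * ‖A m‖) := by ring
  set sb : (ℕ →₀ ℤ) → ℝ := fun ℓ => ∑' m, w m * ‖b ℓ m‖ with hsb_def
  have hsb_nonneg : ∀ ℓ, 0 ≤ sb ℓ := fun ℓ =>
    tsum_nonneg fun m => mul_nonneg (hwpos m).le (norm_nonneg _)
  have hsb_le : ∀ ℓ, sb ℓ ≤ ρ * wnorm η ℓ := by
    intro ℓ
    have h1 : sb ℓ ≤ ∑' m, onorm ℓ * (w m * ‖A m‖) := by
      refine Summable.tsum_le_tsum (fun m => ?_) (hbsum ℓ) (hA'.mul_left (onorm ℓ))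
      calc w m * ‖b ℓ m‖ ≤ w m * (onorm ℓ * ‖A m‖) :=
            mul_le_mul_of_nonneg_left (hbnorm ℓ m) (hwpos m).le
        _ = onorm ℓ * (w m * ‖A m‖) := by ring
    rw [tsum_mul_left] at h1
    calc sb ℓ ≤ onorm ℓ * ∑' m, w m * ‖A m‖ := h1
      _ ≤ wnorm η ℓ * ρ := by
          refine mul_le_mul (onorm_le_wnorm hη.le ℓ) hAρ' ?_ (wnorm_nonneg η ℓ)
          exact tsum_nonneg fun m => mul_nonneg (hwpos m).le (norm_nonneg _)
      _ = ρ * wnorm η ℓ := mul_comm _ _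
  -- the big index type
  set Y := Σ n : ℕ, (Fin n → (ℕ →₀ ℤ)) with hY_def
  set p : (ℕ →₀ ℤ) × Y → (ℕ →₀ ℤ) := fun x => x.1 + ∑ i, x.2.2 i with hp_def
  set T : (ℕ →₀ ℤ) × Y → X := fun x =>
    ((Complex.I ^ x.2.1 / (Nat.factorial x.2.1 : ℂ)) * ∏ i, b x.1 (x.2.2 i)) • u x.1 with hT_def
  set g : (ℕ →₀ ℤ) × Y → ℝ := fun x =>
    (w x.1 * ‖u x.1‖) * ((1 / (Nat.factorial x.2.1 : ℝ)) * ∏ i, (w (x.2.2 i) * ‖b x.1 (x.2.2 i)‖))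
    with hg_def
  have hg0 : ∀ x, 0 ≤ g x := by
    intro x
    refine mul_nonneg (mul_nonneg (hwpos _).le (norm_nonneg _)) (mul_nonneg (by positivity) ?_)
    exact Finset.prod_nonneg fun i _ => mul_nonneg (hwpos _).le (norm_nonneg _)
  -- domination
  have hgdom : ∀ x, w (p x) * ‖T x‖ ≤ g x := by
    rintro ⟨ℓ, n, m⟩
    have hwp : w (p (ℓ, ⟨n, m⟩)) ≤ w ℓ * ∏ i, w (m i) := by
      have h1 : wnorm η (ℓ + ∑ i, m i) ≤ wnorm η ℓ + ∑ i, wnorm η (m i) :=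
        (wnorm_add_le η _ _).trans (by
          have := wnorm_finsetSum_le η Finset.univ m
          linarith)
      have h2 : w (p (ℓ, ⟨n, m⟩)) = Real.exp (σ * wnorm η (ℓ + ∑ i, m i)) := rfl
      rw [h2]
      have h3 : w ℓ * ∏ i, w (m i)
          = Real.exp (σ * (wnorm η ℓ + ∑ i, wnorm η (m i))) := by
        rw [mul_add, Real.exp_add, Finset.mul_sum, Real.exp_sum]
      rw [h3, Real.exp_le_exp]
      exact mul_le_mul_of_nonneg_left h1 hσ.le
    have hTn : ‖T (ℓ, ⟨n, m⟩)‖ = (1 / (Nat.factorial n : ℝ)) * (∏ i, ‖b ℓ (m i)‖) * ‖u ℓ‖ := by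
      show ‖((Complex.I ^ n / (Nat.factorial n : ℂ)) * ∏ i, b ℓ (m i)) • u ℓ‖ = _
      simp only [norm_smul, norm_mul, norm_div, norm_pow, Complex.norm_I, one_pow,
        Complex.norm_natCast, norm_prod]
      try ring
    have hge : g (ℓ, ⟨n, m⟩)
        = (w ℓ * ‖u ℓ‖) * ((1 / (Nat.factorial n : ℝ)) * ∏ i, (w (m i) * ‖b ℓ (m i)‖)) := rfl
    calc w (p (ℓ, ⟨n, m⟩)) * ‖T (ℓ, ⟨n, m⟩)‖
        ≤ (w ℓ * ∏ i, w (m i)) * ‖T (ℓ, ⟨n, m⟩)‖ :=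
          mul_le_mul_of_nonneg_right hwp (norm_nonneg _)
      _ = g (ℓ, ⟨n, m⟩) := by
          rw [hTn, hge, Finset.prod_mul_distrib]
          ring
  -- summability of g, fiberwise
  have hq_real : ∀ ℓ, Summable fun m => ‖w m * ‖b ℓ m‖‖ := by
    intro ℓ
    refine (hbsum ℓ).congr fun m => ?_
    rw [Real.norm_of_nonneg (mul_nonneg (hwpos m).le (norm_nonneg _))]
  have hprod_real : ∀ ℓ n, (Summable fun m : Fin n → (ℕ →₀ ℤ) =>
        ∏ i, (w (m i) * ‖b ℓ (m i)‖)) ∧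
      (∑' m : Fin n → (ℕ →₀ ℤ), ∏ i, (w (m i) * ‖b ℓ (m i)‖)) = (sb ℓ) ^ n := by
    intro ℓ n
    obtain ⟨h1, h2⟩ := tsum_pow_pi (fun m => w m * ‖b ℓ m‖) (hq_real ℓ) n
    have habs : ∀ m : Fin n → (ℕ →₀ ℤ), (∏ i, ‖w (m i) * ‖b ℓ (m i)‖‖)
        = ∏ i, (w (m i) * ‖b ℓ (m i)‖) := by
      intro m
      refine Finset.prod_congr rfl fun i _ => ?_
      rw [Real.norm_of_nonneg (mul_nonneg (hwpos _).le (norm_nonneg _))]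
    exact ⟨h1.congr habs, h2.symm⟩
  have hgfib : ∀ ℓ, (Summable fun y : Y => g (ℓ, y)) ∧
      (∑' y : Y, g (ℓ, y)) = (w ℓ * ‖u ℓ‖) * Real.exp (sb ℓ) := by
    intro ℓ
    have hinner : ∀ n, Summable (fun m : Fin n → (ℕ →₀ ℤ) =>
        (1 / (Nat.factorial n : ℝ)) * ∏ i, (w (m i) * ‖b ℓ (m i)‖)) :=
      fun n => ((hprod_real ℓ n).1).mul_left _
    have hinner_sum : ∀ n, (∑' m : Fin n → (ℕ →₀ ℤ),
        (1 / (Nat.factorial n : ℝ)) * ∏ i, (w (m i) * ‖b ℓ (m i)‖)) = (sb ℓ) ^ n / (Nat.factorial n : ℝ) := by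
      intro n
      rw [tsum_mul_left, (hprod_real ℓ n).2]
      ring
    have houter : Summable fun n : ℕ => (sb ℓ) ^ n / (Nat.factorial n : ℝ) :=
      Real.summable_pow_div_factorial (sb ℓ)
    have hsigma0 : Summable fun y : Y =>
        (1 / (Nat.factorial y.1 : ℝ)) * ∏ i, (w (y.2 i) * ‖b ℓ (y.2 i)‖) := by
      refine (summable_sigma_of_nonneg ?_).2 ⟨fun n => hinner n, ?_⟩
      · rintro ⟨n, m⟩
        exact mul_nonneg (by positivity)
          (Finset.prod_nonneg fun i _ => mul_nonneg (hwpos _).le (norm_nonneg _))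
      · exact houter.congr fun n => (hinner_sum n).symm
    have hsigma_sum : (∑' y : Y, (1 / (Nat.factorial y.1 : ℝ)) * ∏ i, (w (y.2 i) * ‖b ℓ (y.2 i)‖))
        = Real.exp (sb ℓ) := by
      rw [Summable.tsum_sigma hsigma0]
      calc (∑' (n : ℕ) (m : Fin n → (ℕ →₀ ℤ)), (1 / (Nat.factorial n : ℝ)) * ∏ i, (w (m i) * ‖b ℓ (m i)‖))
          = ∑' n : ℕ, (sb ℓ) ^ n / (Nat.factorial n : ℝ) := tsum_congr fun n => hinner_sum n
        _ = Real.exp (sb ℓ) := by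
            rw [Real.exp_eq_exp_ℝ, NormedSpace.exp_eq_tsum_div]
    have hgy : ∀ y : Y, g (ℓ, y)
        = (w ℓ * ‖u ℓ‖) * ((1 / (Nat.factorial y.1 : ℝ)) * ∏ i, (w (y.2 i) * ‖b ℓ (y.2 i)‖)) :=
      fun y => rfl
    constructor
    · exact (hsigma0.mul_left (w ℓ * ‖u ℓ‖)).congr fun y => (hgy y).symm
    · calc (∑' y : Y, g (ℓ, y))
          = ∑' y : Y, (w ℓ * ‖u ℓ‖) *
            ((1 / (Nat.factorial y.1 : ℝ)) * ∏ i, (w (y.2 i) * ‖b ℓ (y.2 i)‖)) :=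
            tsum_congr hgy
        _ = (w ℓ * ‖u ℓ‖) * Real.exp (sb ℓ) := by rw [tsum_mul_left, hsigma_sum]
  have hDle : ∀ ℓ, (w ℓ * ‖u ℓ‖) * Real.exp (sb ℓ)
      ≤ Real.exp ((σ + ρ) * wnorm η ℓ) * ‖u ℓ‖ := by
    intro ℓ
    calc w ℓ * ‖u ℓ‖ * Real.exp (sb ℓ)
        ≤ w ℓ * ‖u ℓ‖ * Real.exp (ρ * wnorm η ℓ) := by
          refine mul_le_mul_of_nonneg_left ?_ (mul_nonneg (hwpos _).le (norm_nonneg _))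
          exact Real.exp_le_exp.2 (hsb_le ℓ)
      _ = Real.exp ((σ + ρ) * wnorm η ℓ) * ‖u ℓ‖ := by
          have : w ℓ = Real.exp (σ * wnorm η ℓ) := rfl
          rw [this, add_mul, Real.exp_add]
          ring
  have hgsum : Summable g := by
    refine (summable_prod_of_nonneg hg0).2 ⟨fun ℓ => (hgfib ℓ).1, ?_⟩
    refine Summable.of_nonneg_of_le (fun ℓ => tsum_nonneg fun y => hg0 _) (fun ℓ => ?_) hu
    rw [(hgfib ℓ).2]
    exact hDle ℓ
  have hgtsum : (∑' x, g x) ≤ ∑' ℓ : ℕ →₀ ℤ, Real.exp ((σ + ρ) * wnorm η ℓ) * ‖u ℓ‖ := by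
    rw [Summable.tsum_prod hgsum]
    refine Summable.tsum_le_tsum (fun ℓ => ?_) (((summable_prod_of_nonneg hg0).1 hgsum).2) hu
    rw [(hgfib ℓ).2]
    exact hDle ℓ
  -- summability of the weighted coefficients
  have hW : Summable fun x => w (p x) * ‖T x‖ :=
    hgsum.of_nonneg_of_le (fun x => mul_nonneg (hwpos _).le (norm_nonneg _)) hgdom
  have hWt : (∑' x, w (p x) * ‖T x‖) ≤ ∑' x, g x := Summable.tsum_le_tsum hgdom hW hgsum
  have hTnormsum : Summable fun x => ‖T x‖ :=
    hW.of_nonneg_of_le (fun x => norm_nonneg _)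
      (fun x => le_mul_of_one_le_left (norm_nonneg _) (hw1 _))
  have hTsum : Summable T := hTnormsum.of_norm
  set E := Equiv.sigmaFiberEquiv p with hE_def
  have hWE : Summable fun z : Σ k : ℕ →₀ ℤ, {x : (ℕ →₀ ℤ) × Y // p x = k} =>
      w (p (E z)) * ‖T (E z)‖ := E.summable_iff.mpr hW
  have hWE0 : ∀ z : Σ k : ℕ →₀ ℤ, {x : (ℕ →₀ ℤ) × Y // p x = k},
      0 ≤ w (p (E z)) * ‖T (E z)‖ := fun z => mul_nonneg (hwpos _).le (norm_nonneg _)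
  have hWfib : ∀ k, Summable fun y : {x : (ℕ →₀ ℤ) × Y // p x = k} =>
      w (p y.val) * ‖T y.val‖ := by
    intro k
    have := ((summable_sigma_of_nonneg hWE0).1 hWE).1 k
    exact this.congr fun y => rfl
  have hWfib_sum : Summable fun k : ℕ →₀ ℤ =>
      ∑' y : {x : (ℕ →₀ ℤ) × Y // p x = k}, w (p y.val) * ‖T y.val‖ := by
    have := ((summable_sigma_of_nonneg hWE0).1 hWE).2
    exact this.congr fun k => tsum_congr fun y => rfl
  have hTfibnorm : ∀ k, Summable fun y : {x : (ℕ →₀ ℤ) × Y // p x = k} => ‖T y.val‖ := by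
    intro k
    exact (hWfib k).of_nonneg_of_le (fun y => norm_nonneg _)
      (fun y => le_mul_of_one_le_left (norm_nonneg _) (hw1 _))
  have hTfib : ∀ k, Summable fun y : {x : (ℕ →₀ ℤ) × Y // p x = k} => T y.val :=
    fun k => (hTfibnorm k).of_norm
  -- the coefficients
  set c : (ℕ →₀ ℤ) → X := fun k => ∑' y : {x : (ℕ →₀ ℤ) × Y // p x = k}, T y.val with hc_def
  have hkey : ∀ k, w k * ‖c k‖ ≤
      ∑' y : {x : (ℕ →₀ ℤ) × Y // p x = k}, w (p y.val) * ‖T y.val‖ := by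
    intro k
    have h1 : ‖c k‖ ≤ ∑' y : {x : (ℕ →₀ ℤ) × Y // p x = k}, ‖T y.val‖ :=
      norm_tsum_le_tsum_norm (hTfibnorm k)
    calc w k * ‖c k‖ ≤ w k * ∑' y : {x : (ℕ →₀ ℤ) × Y // p x = k}, ‖T y.val‖ :=
          mul_le_mul_of_nonneg_left h1 (hwpos k).le
      _ = ∑' y : {x : (ℕ →₀ ℤ) × Y // p x = k}, w k * ‖T y.val‖ := tsum_mul_left.symm
      _ = ∑' y : {x : (ℕ →₀ ℤ) × Y // p x = k}, w (p y.val) * ‖T y.val‖ :=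
          tsum_congr fun y => by rw [y.prop]
  have hcs : Summable fun k => w k * ‖c k‖ :=
    hWfib_sum.of_nonneg_of_le (fun k => mul_nonneg (hwpos k).le (norm_nonneg _)) hkey
  have hct : (∑' k, w k * ‖c k‖) ≤ ∑' ℓ : ℕ →₀ ℤ, Real.exp ((σ + ρ) * wnorm η ℓ) * ‖u ℓ‖ := by
    have h1 : (∑' k, w k * ‖c k‖) ≤
        ∑' k, ∑' y : {x : (ℕ →₀ ℤ) × Y // p x = k}, w (p y.val) * ‖T y.val‖ :=
      Summable.tsum_le_tsum hkey hcs hWfib_sum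
    have h2 : (∑' k, ∑' y : {x : (ℕ →₀ ℤ) × Y // p x = k}, w (p y.val) * ‖T y.val‖)
        = ∑' z : Σ k : ℕ →₀ ℤ, {x : (ℕ →₀ ℤ) × Y // p x = k}, w (p (E z)) * ‖T (E z)‖ :=
      (Summable.tsum_sigma hWE).symm
    have h3 : (∑' z : Σ k : ℕ →₀ ℤ, {x : (ℕ →₀ ℤ) × Y // p x = k}, w (p (E z)) * ‖T (E z)‖)
        = ∑' x, w (p x) * ‖T x‖ := E.tsum_eq (fun x => w (p x) * ‖T x‖)
    calc (∑' k, w k * ‖c k‖) ≤ _ := h1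
      _ = ∑' x, w (p x) * ‖T x‖ := by rw [h2, h3]
      _ ≤ ∑' x, g x := hWt
      _ ≤ _ := hgtsum
  refine ⟨c, hcs, hct, ?_⟩
  intro θ hθ
  have hchr : ∀ k, ‖chr k θ‖ ≤ w k := fun k => chr_norm_le hθ k
  set V : (ℕ →₀ ℤ) × Y → X := fun x => chr (p x) θ • T x with hV_def
  have hVnorm : ∀ x, ‖V x‖ ≤ w (p x) * ‖T x‖ := by
    intro x
    have : ‖V x‖ = ‖chr (p x) θ‖ * ‖T x‖ := norm_smul _ _
    rw [this]
    exact mul_le_mul_of_nonneg_right (hchr _) (norm_nonneg _)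
  have hVsum : Summable V :=
    Summable.of_norm (hW.of_nonneg_of_le (fun x => norm_nonneg _) hVnorm)
  -- the ℓ-th inner sum
  have hkeyB : ∀ ℓ : ℕ →₀ ℤ,
      (Complex.exp (Complex.I * ∑ j ∈ ℓ.support, (ℓ j : ℂ) * (θ j + vecEval A θ j))) • u ℓ
        = ∑' y : Y, V (ℓ, y) := by
    intro ℓ
    set q : (ℕ →₀ ℤ) → ℂ := fun m => Complex.I * (b ℓ m * chr m θ) with hq_def
    have hqb : ∀ m, ‖q m‖ ≤ onorm ℓ * (w m * ‖A m‖) := by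
      intro m
      have h1 : ‖q m‖ = ‖b ℓ m‖ * ‖chr m θ‖ := by
        rw [hq_def]
        simp [norm_mul]
      rw [h1]
      calc ‖b ℓ m‖ * ‖chr m θ‖ ≤ (onorm ℓ * ‖A m‖) * w m :=
            mul_le_mul (hbnorm ℓ m) (hchr m) (norm_nonneg _)
              (mul_nonneg (onorm_nonneg ℓ) (norm_nonneg _))
        _ = onorm ℓ * (w m * ‖A m‖) := by ring
    have hqsum : Summable fun m => ‖q m‖ :=
      (hA'.mul_left (onorm ℓ)).of_nonneg_of_le (fun m => norm_nonneg _) hqb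
    have hq : Summable q := hqsum.of_norm
    -- the exponent identity
    have hv : ∀ j, vecEval A θ j = ∑' m : ℕ →₀ ℤ, (A m : ℕ → ℂ) j * chr m θ := fun j => rfl
    have hIS : Complex.I * (∑ j ∈ ℓ.support, (ℓ j : ℂ) * vecEval A θ j) = ∑' m, q m := by
      have hsum_each : ∀ j ∈ ℓ.support, Summable fun m : ℕ →₀ ℤ =>
          (Complex.I * (ℓ j : ℂ)) * ((A m : ℕ → ℂ) j * chr m θ) := by
        intro j _
        refine Summable.of_norm ?_
        refine (hA'.mul_left (‖Complex.I * (ℓ j : ℂ)‖)).of_nonneg_of_le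
          (fun m => norm_nonneg _) (fun m => ?_)
        rw [norm_mul]
        refine mul_le_mul_of_nonneg_left ?_ (norm_nonneg _)
        calc ‖(A m : ℕ → ℂ) j * chr m θ‖ = ‖(A m : ℕ → ℂ) j‖ * ‖chr m θ‖ := norm_mul _ _
          _ ≤ ‖A m‖ * w m :=
              mul_le_mul (lp.norm_apply_le_norm (by norm_num) (A m) j) (hchr m)
                (norm_nonneg _) (norm_nonneg _)
          _ = w m * ‖A m‖ := mul_comm _ _
      calc Complex.I * (∑ j ∈ ℓ.support, (ℓ j : ℂ) * vecEval A θ j)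
          = ∑ j ∈ ℓ.support, (Complex.I * (ℓ j : ℂ))
              * ∑' m : ℕ →₀ ℤ, (A m : ℕ → ℂ) j * chr m θ := by
            rw [Finset.mul_sum]
            refine Finset.sum_congr rfl fun j _ => ?_
            rw [hv j]
            ring
        _ = ∑ j ∈ ℓ.support, ∑' m : ℕ →₀ ℤ,
              (Complex.I * (ℓ j : ℂ)) * ((A m : ℕ → ℂ) j * chr m θ) := by
            refine Finset.sum_congr rfl fun j _ => ?_
            rw [tsum_mul_left]
        _ = ∑' m : ℕ →₀ ℤ, ∑ j ∈ ℓ.support,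
              (Complex.I * (ℓ j : ℂ)) * ((A m : ℕ → ℂ) j * chr m θ) :=
            (Summable.tsum_finsetSum hsum_each).symm
        _ = ∑' m, q m := by
            refine tsum_congr fun m => ?_
            simp only [hq_def, hb_def]
            rw [Finset.sum_mul, Finset.mul_sum]
            refine Finset.sum_congr rfl fun j _ => ?_
            ring
    -- power expansion facts
    have hqprodnorm : ∀ n, Summable fun m : Fin n → (ℕ →₀ ℤ) => ‖∏ i, q (m i)‖ := by
      intro n
      exact ((tsum_pow_pi q hqsum n).1).congr fun m => (norm_prod _ _).symm
    have hqprod : ∀ n, Summable fun m : Fin n → (ℕ →₀ ℤ) => ∏ i, q (m i) :=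
      fun n => (hqprodnorm n).of_norm
    -- identify the terms
    have hVy : ∀ (n : ℕ) (m : Fin n → (ℕ →₀ ℤ)), V (ℓ, ⟨n, m⟩)
        = ((chr ℓ θ / (Nat.factorial n : ℂ)) * ∏ i, q (m i)) • u ℓ := by
      intro n m
      have h0 : V (ℓ, ⟨n, m⟩) = chr (ℓ + ∑ i, m i) θ •
          (((Complex.I ^ n / (Nat.factorial n : ℂ)) * ∏ i, b ℓ (m i)) • u ℓ) := rfl
      rw [h0, smul_smul]
      congr 1
      have hprodq : (∏ i, q (m i))
          = Complex.I ^ n * (∏ i, b ℓ (m i)) * chr (∑ i, m i) θ := by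
        calc (∏ i, q (m i)) = ∏ i, (Complex.I * (b ℓ (m i) * chr (m i) θ)) := rfl
          _ = (∏ _i : Fin n, Complex.I) * ∏ i, (b ℓ (m i) * chr (m i) θ) :=
              Finset.prod_mul_distrib
          _ = Complex.I ^ n * ((∏ i, b ℓ (m i)) * ∏ i, chr (m i) θ) := by
              rw [Finset.prod_const, Finset.card_univ, Fintype.card_fin,
                Finset.prod_mul_distrib]
          _ = Complex.I ^ n * (∏ i, b ℓ (m i)) * chr (∑ i, m i) θ := by
              rw [← chr_sum]
              ring
      rw [hprodq, chr_add]
      ring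
    -- sum over the sigma type
    have hVl : Summable fun y : Y => V (ℓ, y) := hVsum.prod_factor ℓ
    have hinner_eq : ∀ n : ℕ, (∑' m : Fin n → (ℕ →₀ ℤ), V (ℓ, ⟨n, m⟩))
        = (chr ℓ θ * ((∑' m, q m) ^ n / (Nat.factorial n : ℂ))) • u ℓ := by
      intro n
      calc (∑' m : Fin n → (ℕ →₀ ℤ), V (ℓ, ⟨n, m⟩))
          = ∑' m : Fin n → (ℕ →₀ ℤ),
              ((chr ℓ θ / (Nat.factorial n : ℂ)) * ∏ i, q (m i)) • u ℓ :=
            tsum_congr fun m => hVy n m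
        _ = (∑' m : Fin n → (ℕ →₀ ℤ),
              (chr ℓ θ / (Nat.factorial n : ℂ)) * ∏ i, q (m i)) • u ℓ :=
            Summable.tsum_smul_const ((hqprod n).mul_left _) (u ℓ)
        _ = (chr ℓ θ * ((∑' m, q m) ^ n / (Nat.factorial n : ℂ))) • u ℓ := by
            rw [tsum_mul_left, (tsum_pow_pi q hqsum n).2]
            congr 1
            ring
    have hexp_summ : Summable fun n : ℕ =>
        chr ℓ θ * ((∑' m, q m) ^ n / (Nat.factorial n : ℂ)) :=
      (NormedSpace.expSeries_div_summable (∑' m, q m)).mul_left _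
    have hfinal : (∑' y : Y, V (ℓ, y))
        = (chr ℓ θ * Complex.exp (∑' m, q m)) • u ℓ := by
      calc (∑' y : Y, V (ℓ, y))
          = ∑' (n : ℕ) (m : Fin n → (ℕ →₀ ℤ)), V (ℓ, ⟨n, m⟩) := Summable.tsum_sigma hVl
        _ = ∑' n : ℕ, (chr ℓ θ * ((∑' m, q m) ^ n / (Nat.factorial n : ℂ))) • u ℓ :=
            tsum_congr fun n => hinner_eq n
        _ = (∑' n : ℕ, chr ℓ θ * ((∑' m, q m) ^ n / (Nat.factorial n : ℂ))) • u ℓ :=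
            Summable.tsum_smul_const hexp_summ (u ℓ)
        _ = (chr ℓ θ * Complex.exp (∑' m, q m)) • u ℓ := by
            rw [tsum_mul_left]
            congr 2
            rw [Complex.exp_eq_exp_ℂ, NormedSpace.exp_eq_tsum_div]
    rw [hfinal, ← hIS]
    congr 1
    have hsplit : (∑ j ∈ ℓ.support, (ℓ j : ℂ) * (θ j + vecEval A θ j))
        = (∑ j ∈ ℓ.support, (ℓ j : ℂ) * θ j)
          + ∑ j ∈ ℓ.support, (ℓ j : ℂ) * vecEval A θ j := by
      rw [← Finset.sum_add_distrib]
      refine Finset.sum_congr rfl fun j _ => ?_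
      ring
    rw [hsplit, mul_add, Complex.exp_add]
    rfl
  -- assemble
  have hLHS : (∑' ℓ : ℕ →₀ ℤ, Complex.exp (Complex.I * ∑ j ∈ ℓ.support,
      (ℓ j : ℂ) * (θ j + vecEval A θ j)) • u ℓ) = ∑' x, V x := by
    rw [Summable.tsum_prod hVsum]
    exact tsum_congr fun ℓ => hkeyB ℓ
  have hVE : Summable fun z : Σ k : ℕ →₀ ℤ, {x : (ℕ →₀ ℤ) × Y // p x = k} => V (E z) :=
    E.summable_iff.mpr hVsum
  have hRHS : (∑' x, V x) = ∑' k : ℕ →₀ ℤ, chr k θ • c k := by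
    calc (∑' x, V x)
        = ∑' z : Σ k : ℕ →₀ ℤ, {x : (ℕ →₀ ℤ) × Y // p x = k}, V (E z) := (E.tsum_eq V).symm
      _ = ∑' (k : ℕ →₀ ℤ) (y : {x : (ℕ →₀ ℤ) × Y // p x = k}), V (E ⟨k, y⟩) :=
          Summable.tsum_sigma hVE
      _ = ∑' k : ℕ →₀ ℤ, chr k θ • c k := by
          refine tsum_congr fun k => ?_
          have h1 : ∀ y : {x : (ℕ →₀ ℤ) × Y // p x = k},
              V (E ⟨k, y⟩) = chr k θ • T y.val := by
            intro y
            have h2 : V (E ⟨k, y⟩) = chr (p y.val) θ • T y.val := rfl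
            rw [h2, y.prop]
          rw [tsum_congr h1]
          exact Summable.tsum_const_smul (chr k θ) (hTfib k)
  rw [hLHS, hRHS]
  rfl
end

section
/- (Weighted small-divisor series convergence) Let $\mu_1, \mu_2 > 3$ and define $\mathtt{d}(\ell) := \prod_{i\in\mathbb{N}}(1+\langle i\rangle^{\mu_1}|\ell_i|^{\mu_2})$ for finitely supported integer sequences $\ell$. Then $\sum_{\ell \in \mathbb{Z}^\infty_*} \frac{\|\ell\|_1^2}{\mathtt{d}(\ell)} < \infty$, where $\|\ell\|_1 = \sum_i |\ell_i|$. -/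
open scoped BigOperators

namespace Stmt17Aux

noncomputable def g (μ₁ μ₂ : ℝ) (i : ℕ) (k : ℤ) : ℝ :=
  (1 + |(k : ℝ)|) ^ 2 / (1 + ((i : ℝ) + 1) ^ μ₁ * |(k : ℝ)| ^ μ₂)

lemma den_pos (μ₁ μ₂ : ℝ) (i : ℕ) (k : ℤ) :
    0 < 1 + ((i : ℝ) + 1) ^ μ₁ * |(k : ℝ)| ^ μ₂ := by positivity

lemma g_nonneg (μ₁ μ₂ : ℝ) (i : ℕ) (k : ℤ) : 0 ≤ g μ₁ μ₂ i k := by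
  unfold g; positivity

lemma g_zero (μ₁ : ℝ) {μ₂ : ℝ} (hμ₂ : μ₂ ≠ 0) (i : ℕ) : g μ₁ μ₂ i 0 = 1 := by
  simp [g, Real.zero_rpow hμ₂]

lemma g_le {μ₁ μ₂ : ℝ} (i : ℕ) {k : ℤ} (hk : k ≠ 0) :
    g μ₁ μ₂ i k ≤ 4 * ((i : ℝ) + 1) ^ (-μ₁) * |(k : ℝ)| ^ (-(μ₂ - 2)) := by
  have hx : (1 : ℝ) ≤ |(k : ℝ)| := by
    rw [← Int.cast_abs]
    exact_mod_cast Int.one_le_abs hk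
  have hx0 : (0 : ℝ) < |(k : ℝ)| := lt_of_lt_of_le one_pos hx
  have hi0 : (0 : ℝ) < ((i : ℝ) + 1) ^ μ₁ := by positivity
  have h1 : g μ₁ μ₂ i k ≤ (4 * |(k : ℝ)| ^ 2) / (((i : ℝ) + 1) ^ μ₁ * |(k : ℝ)| ^ μ₂) := by
    apply div_le_div₀ (by positivity)
    · nlinarith [sq_nonneg (|(k : ℝ)| - 1)]
    · positivity
    · linarith [mul_nonneg hi0.le (Real.rpow_nonneg hx0.le μ₂), (le_refl (0:ℝ))]
  refine h1.trans_eq ?_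
  rw [Real.rpow_neg (by positivity), Real.rpow_neg hx0.le,
    Real.rpow_sub hx0, ← Real.rpow_natCast |(k : ℝ)| 2]
  push_cast
  field_simp

noncomputable def g' (μ₁ μ₂ : ℝ) (i : ℕ) (k : ℤ) : ℝ :=
  if k = 0 then 0 else g μ₁ μ₂ i k

lemma g'_nonneg (μ₁ μ₂ : ℝ) (i : ℕ) (k : ℤ) : 0 ≤ g' μ₁ μ₂ i k := by
  unfold g'; split
  · exact le_refl 0
  · exact g_nonneg _ _ _ _

lemma summable_g' {μ₁ μ₂ : ℝ} (hμ₂ : 3 < μ₂) (i : ℕ) : Summable (g' μ₁ μ₂ i) := by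
  have hb : (1 : ℝ) < μ₂ - 2 := by linarith
  have hs : Summable (fun k : ℤ => 4 * ((i : ℝ) + 1) ^ (-μ₁) * |(k : ℝ)| ^ (-(μ₂ - 2))) :=
    (Real.summable_abs_int_rpow hb).mul_left _
  refine Summable.of_nonneg_of_le (g'_nonneg _ _ _) (fun k => ?_) hs
  unfold g'
  split
  · positivity
  · exact g_le i ‹k ≠ 0›

lemma g'_le (μ₁ : ℝ) {μ₂ : ℝ} (i : ℕ) (k : ℤ) :
    g' μ₁ μ₂ i k ≤ 4 * ((i : ℝ) + 1) ^ (-μ₁) * |(k : ℝ)| ^ (-(μ₂ - 2)) := by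
  unfold g'
  split
  · positivity
  · exact g_le i ‹k ≠ 0›

noncomputable def e (μ₁ μ₂ : ℝ) (i : ℕ) : ℝ := ∑' k : ℤ, g' μ₁ μ₂ i k

lemma e_nonneg (μ₁ μ₂ : ℝ) (i : ℕ) : 0 ≤ e μ₁ μ₂ i :=
  tsum_nonneg (g'_nonneg μ₁ μ₂ i)

lemma summable_e {μ₁ μ₂ : ℝ} (hμ₁ : 3 < μ₁) (hμ₂ : 3 < μ₂) : Summable (e μ₁ μ₂) := by
  have hb : (1 : ℝ) < μ₂ - 2 := by linarith
  set H : ℝ := ∑' k : ℤ, |(k : ℝ)| ^ (-(μ₂ - 2)) with hH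
  have hH0 : 0 ≤ H := tsum_nonneg fun k => Real.rpow_nonneg (abs_nonneg _) _
  have he_le : ∀ i, e μ₁ μ₂ i ≤ 4 * H * ((i : ℝ) + 1) ^ (-μ₁) := by
    intro i
    have := Summable.tsum_le_tsum (g'_le μ₁ (μ₂ := μ₂) i) (summable_g' hμ₂ i)
      ((Real.summable_abs_int_rpow hb).mul_left _)
    rw [tsum_mul_left] at this
    calc e μ₁ μ₂ i ≤ 4 * ((i : ℝ) + 1) ^ (-μ₁) * H := this
      _ = 4 * H * ((i : ℝ) + 1) ^ (-μ₁) := by ring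
  have hsum : Summable (fun i : ℕ => ((i : ℝ) + 1) ^ (-μ₁)) := by
    have h1 : Summable (fun n : ℕ => ((n : ℝ)) ^ (-μ₁)) :=
      Real.summable_nat_rpow.2 (by linarith)
    have := (summable_nat_add_iff 1).2 h1
    refine this.congr fun n => ?_
    push_cast
    ring_nf
  exact Summable.of_nonneg_of_le (e_nonneg μ₁ μ₂) he_le (hsum.mul_left _)

lemma sum_le_prod_one_add {ι : Type*} (s : Finset ι) (a : ι → ℝ)
    (ha : ∀ i ∈ s, 0 ≤ a i) : ∑ i ∈ s, a i ≤ ∏ i ∈ s, (1 + a i) := by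
  classical
  induction s using Finset.induction_on with
  | empty => simp
  | @insert j s hj ih =>
    rw [Finset.sum_insert hj, Finset.prod_insert hj]
    have haj : 0 ≤ a j := ha j (Finset.mem_insert_self j s)
    have h1 : ∀ i ∈ s, 0 ≤ a i := fun i hi => ha i (Finset.mem_insert_of_mem hi)
    have h2 : ∑ i ∈ s, a i ≤ ∏ i ∈ s, (1 + a i) := ih h1
    have h3 : (1 : ℝ) ≤ ∏ i ∈ s, (1 + a i) := by
      calc (1 : ℝ) = ∏ _i ∈ s, (1 : ℝ) := by simp
        _ ≤ ∏ i ∈ s, (1 + a i) :=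
          Finset.prod_le_prod (fun i _ => zero_le_one) (fun i hi => by linarith [h1 i hi])
    nlinarith

end Stmt17Aux

open Stmt17Aux in
/-- Weighted small-divisor series convergence: for `μ₁, μ₂ > 3`,
`∑_{ℓ ∈ ℤ^∞_*} ‖ℓ‖₁² / 𝚍(ℓ) < ∞` where `𝚍(ℓ) = ∏_i (1 + ⟨i⟩^{μ₁}|ℓ_i|^{μ₂})`. -/
theorem stmt17 (μ₁ μ₂ : ℝ) (hμ₁ : 3 < μ₁) (hμ₂ : 3 < μ₂) :
    Summable (fun ℓ : ℕ →₀ ℤ =>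
      (∑ i ∈ ℓ.support, |(ℓ i : ℝ)|) ^ 2 /
        ∏ i ∈ ℓ.support, (1 + ((i : ℝ) + 1) ^ μ₁ * |(ℓ i : ℝ)| ^ μ₂)) := by
  classical
  have hμ₂0 : μ₂ ≠ 0 := by linarith
  set G : (ℕ →₀ ℤ) → ℝ := fun ℓ => ∏ i ∈ ℓ.support, g μ₁ μ₂ i (ℓ i) with hG
  -- pointwise bound by the multiplicative majorant G
  have hfG : ∀ ℓ : ℕ →₀ ℤ,
      (∑ i ∈ ℓ.support, |(ℓ i : ℝ)|) ^ 2 /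
        ∏ i ∈ ℓ.support, (1 + ((i : ℝ) + 1) ^ μ₁ * |(ℓ i : ℝ)| ^ μ₂) ≤ G ℓ := by
    intro ℓ
    have hden : (0 : ℝ) < ∏ i ∈ ℓ.support, (1 + ((i : ℝ) + 1) ^ μ₁ * |(ℓ i : ℝ)| ^ μ₂) :=
      Finset.prod_pos fun i _ => den_pos μ₁ μ₂ i (ℓ i)
    have hnum : (∑ i ∈ ℓ.support, |(ℓ i : ℝ)|) ^ 2 ≤
        ∏ i ∈ ℓ.support, (1 + |(ℓ i : ℝ)|) ^ 2 := by
      rw [Finset.prod_pow]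
      refine pow_le_pow_left₀ (Finset.sum_nonneg fun i _ => abs_nonneg _) ?_ 2
      exact sum_le_prod_one_add _ _ fun i _ => abs_nonneg _
    calc (∑ i ∈ ℓ.support, |(ℓ i : ℝ)|) ^ 2 /
          ∏ i ∈ ℓ.support, (1 + ((i : ℝ) + 1) ^ μ₁ * |(ℓ i : ℝ)| ^ μ₂)
        ≤ (∏ i ∈ ℓ.support, (1 + |(ℓ i : ℝ)|) ^ 2) /
          ∏ i ∈ ℓ.support, (1 + ((i : ℝ) + 1) ^ μ₁ * |(ℓ i : ℝ)| ^ μ₂) :=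
          (div_le_div_iff_of_pos_right hden).2 hnum
      _ = G ℓ := by
          rw [hG, ← Finset.prod_div_distrib]
          rfl
  -- G is summable
  have hGsum : Summable G := by
    apply summable_of_sum_le (c := Real.exp (∑' i, e μ₁ μ₂ i))
    · intro ℓ
      exact Finset.prod_nonneg fun i _ => g_nonneg μ₁ μ₂ i (ℓ i)
    · intro T
      set A : Finset ℕ := T.sup Finsupp.support with hA
      set B : ℕ := T.sup (fun ℓ => ℓ.support.sup fun i => (ℓ i).natAbs) with hB
      set S : Finset ℤ := Finset.Icc (-(B : ℤ)) (B : ℤ) with hS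
      have hsupp : ∀ ℓ ∈ T, ℓ.support ⊆ A := fun ℓ h => Finset.le_sup h
      have hval : ∀ ℓ ∈ T, ∀ i : ℕ, ℓ i ∈ S := by
        intro ℓ hT i
        rcases eq_or_ne (ℓ i) 0 with h | h
        · simp [hS, h]
        · have hi : i ∈ ℓ.support := Finsupp.mem_support_iff.2 h
          have h1 : (ℓ i).natAbs ≤ ℓ.support.sup fun j => (ℓ j).natAbs :=
            Finset.le_sup (f := fun j => (ℓ j).natAbs) hi
          have h2 : (ℓ.support.sup fun j => (ℓ j).natAbs) ≤ B :=
            Finset.le_sup (f := fun ℓ : ℕ →₀ ℤ => ℓ.support.sup fun j => (ℓ j).natAbs) hT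
          have h3 : (ℓ i).natAbs ≤ B := le_trans h1 h2
          simp only [hS, Finset.mem_Icc]
          omega
      -- extend the product over the support to a product over A
      have step1 : ∑ ℓ ∈ T, G ℓ = ∑ ℓ ∈ T, ∏ i ∈ A, g μ₁ μ₂ i (ℓ i) := by
        refine Finset.sum_congr rfl fun ℓ hT => ?_
        refine Finset.prod_subset (hsupp ℓ hT) fun i _ hi => ?_
        rw [Finsupp.notMem_support_iff.1 hi, g_zero μ₁ hμ₂0]
      -- compare with the sum over the full pi-set
      set E : (ℕ →₀ ℤ) → (∀ a ∈ A, ℤ) := fun ℓ a _ => ℓ a with hE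
      have hinj : ∀ ℓ₁ ∈ T, ∀ ℓ₂ ∈ T, E ℓ₁ = E ℓ₂ → ℓ₁ = ℓ₂ := by
        intro ℓ₁ h₁ ℓ₂ h₂ heq
        ext a
        by_cases ha : a ∈ A
        · have := congr_fun (congr_fun heq a) ha
          exact this
        · have h01 : ℓ₁ a = 0 := by
            by_contra h
            exact ha (hsupp ℓ₁ h₁ (Finsupp.mem_support_iff.2 h))
          have h02 : ℓ₂ a = 0 := by
            by_contra h
            exact ha (hsupp ℓ₂ h₂ (Finsupp.mem_support_iff.2 h))
          rw [h01, h02]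
      have step2 : ∑ ℓ ∈ T, ∏ i ∈ A, g μ₁ μ₂ i (ℓ i) ≤
          ∏ i ∈ A, ∑ k ∈ S, g μ₁ μ₂ i k := by
        rw [Finset.prod_sum]
        have himg : ∑ ℓ ∈ T, ∏ i ∈ A, g μ₁ μ₂ i (ℓ i) =
            ∑ p ∈ T.image E, ∏ x ∈ A.attach, g μ₁ μ₂ x.1 (p x.1 x.2) := by
          rw [Finset.sum_image hinj]
          refine Finset.sum_congr rfl fun ℓ _ => ?_
          rw [← Finset.prod_attach A (fun i => g μ₁ μ₂ i (ℓ i))]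
        rw [himg]
        refine Finset.sum_le_sum_of_subset_of_nonneg ?_ ?_
        · intro p hp
          rcases Finset.mem_image.1 hp with ⟨ℓ, hℓ, rfl⟩
          refine Finset.mem_pi.2 fun a ha => hval ℓ hℓ a
        · intro p _ _
          exact Finset.prod_nonneg fun x _ => g_nonneg μ₁ μ₂ x.1 _
      have step3 : ∏ i ∈ A, ∑ k ∈ S, g μ₁ μ₂ i k ≤ ∏ i ∈ A, Real.exp (e μ₁ μ₂ i) := by
        refine Finset.prod_le_prod (fun i _ => Finset.sum_nonneg fun k _ =>
          g_nonneg μ₁ μ₂ i k) fun i _ => ?_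
        have h0S : (0 : ℤ) ∈ S := by simp [hS]
        have hsplit : ∑ k ∈ S, g μ₁ μ₂ i k =
            g μ₁ μ₂ i 0 + ∑ k ∈ S.erase 0, g μ₁ μ₂ i k :=
          (Finset.add_sum_erase S (g μ₁ μ₂ i) h0S).symm
        have herase : ∑ k ∈ S.erase 0, g μ₁ μ₂ i k ≤ e μ₁ μ₂ i := by
          have : ∑ k ∈ S.erase 0, g μ₁ μ₂ i k = ∑ k ∈ S.erase 0, g' μ₁ μ₂ i k := by
            refine Finset.sum_congr rfl fun k hk => ?_
            have hk0 : k ≠ 0 := Finset.ne_of_mem_erase hk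
            simp [g', hk0]
          rw [this]
          exact Summable.sum_le_tsum _ (fun k _ => g'_nonneg μ₁ μ₂ i k) (summable_g' hμ₂ i)
        calc ∑ k ∈ S, g μ₁ μ₂ i k = g μ₁ μ₂ i 0 + ∑ k ∈ S.erase 0, g μ₁ μ₂ i k := hsplit
          _ ≤ 1 + e μ₁ μ₂ i := by rw [g_zero μ₁ hμ₂0]; linarith
          _ ≤ Real.exp (e μ₁ μ₂ i) := by linarith [Real.add_one_le_exp (e μ₁ μ₂ i)]
      have step4 : ∏ i ∈ A, Real.exp (e μ₁ μ₂ i) ≤ Real.exp (∑' i, e μ₁ μ₂ i) := by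
        rw [← Real.exp_sum]
        exact Real.exp_le_exp.2 (Summable.sum_le_tsum A (fun i _ => e_nonneg μ₁ μ₂ i)
          (summable_e hμ₁ hμ₂))
      calc ∑ ℓ ∈ T, G ℓ = ∑ ℓ ∈ T, ∏ i ∈ A, g μ₁ μ₂ i (ℓ i) := step1
        _ ≤ ∏ i ∈ A, ∑ k ∈ S, g μ₁ μ₂ i k := step2
        _ ≤ ∏ i ∈ A, Real.exp (e μ₁ μ₂ i) := step3
        _ ≤ Real.exp (∑' i, e μ₁ μ₂ i) := step4
  refine Summable.of_nonneg_of_le (fun ℓ => ?_) hfG hGsum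
  have hden : (0 : ℝ) < ∏ i ∈ ℓ.support, (1 + ((i : ℝ) + 1) ^ μ₁ * |(ℓ i : ℝ)| ^ μ₂) :=
    Finset.prod_pos fun i _ => den_pos μ₁ μ₂ i (ℓ i)
  positivity
end
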